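/- arXiv:2210.02557 — 10 statements merged into one kernel-verified Lean document; each statement's English description precedes it below -/
import Mathlib

section
/- Let N ≥ 2 channels have rates r_i > 0 and availability probabilities p_i ∈ (0,1], let Δ > 0, and suppose channel i* uniquely maximizes throughput: r_{i*} p_{i*} > r_j p_j for all j ≠ i*. Let h = argmax_{j ≠ i*} r_j p_j and define the threshold H = ( Δ·(1−p_{i*})/p_{i*} ) / ( 1/(r_h p_h) − 1/(r_{i*} p_{i*}) ). Then for every file size F ≥ H and every channel j, E[T(i*,F)] ≤ E[T(j,F)]; that is, the max-throughput channel is static optimal for all F ≥ H. -/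
/-- Expected static transfer time of a file of size `F` over a Bernoulli channel with
rate `r`, availability probability `p`, and slot duration `Δ`:
`E[T] = Δ(k/p + 1{α>0}(1-p)/p + α)` where `k = ⌊F/(Δr)⌋` and `α = F/(Δr) - k`. -/
noncomputable def ET (Δ r p F : ℝ) : ℝ :=
  Δ * ((⌊F / (Δ * r)⌋₊ : ℝ) / p
    + (if 0 < F / (Δ * r) - (⌊F / (Δ * r)⌋₊ : ℝ) then (1 - p) / p else 0)
    + (F / (Δ * r) - (⌊F / (Δ * r)⌋₊ : ℝ)))

lemma ET_lower (Δ r p F : ℝ) (hΔ : 0 < Δ) (hr : 0 < r) (hp : 0 < p) (hp1 : p ≤ 1)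
    (hF : 0 ≤ F) : F / (r * p) ≤ Δ * ((⌊F / (Δ * r)⌋₊ : ℝ) / p
    + (if 0 < F / (Δ * r) - (⌊F / (Δ * r)⌋₊ : ℝ) then (1 - p) / p else 0)
    + (F / (Δ * r) - (⌊F / (Δ * r)⌋₊ : ℝ))) := by
  set x := F / (Δ * r) with hxdef
  have hx : 0 ≤ x := by positivity
  have hk : (⌊x⌋₊ : ℝ) ≤ x := Nat.floor_le hx
  have hk1 : x < ⌊x⌋₊ + 1 := Nat.lt_floor_add_one x
  have hFx : F / (r * p) = Δ * x / p := by
    rw [hxdef]; field_simp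
  rw [hFx]
  split_ifs with hpos
  · rw [div_le_iff₀ hp, ← sub_nonneg]
    have : Δ * ((⌊x⌋₊ : ℝ) / p + (1 - p) / p + (x - ⌊x⌋₊)) * p - Δ * x
        = Δ * (1 - p) * ((⌊x⌋₊ : ℝ) + 1 - x) := by field_simp; ring
    rw [this]
    have h2 : (0:ℝ) ≤ 1 - p := by linarith
    have h3 : (0:ℝ) ≤ (⌊x⌋₊ : ℝ) + 1 - x := by linarith
    positivity
  · push_neg at hpos
    have hxe : x = (⌊x⌋₊ : ℝ) := le_antisymm (by linarith) hk
    rw [← hxe]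
    rw [div_le_iff₀ hp]
    have : Δ * (x / p + 0 + (x - x)) * p = Δ * x := by field_simp; ring
    linarith [this.ge.trans_eq rfl]

lemma ET_upper (Δ r p F : ℝ) (hΔ : 0 < Δ) (hr : 0 < r) (hp : 0 < p) (hp1 : p ≤ 1)
    (hF : 0 ≤ F) : Δ * ((⌊F / (Δ * r)⌋₊ : ℝ) / p
    + (if 0 < F / (Δ * r) - (⌊F / (Δ * r)⌋₊ : ℝ) then (1 - p) / p else 0)
    + (F / (Δ * r) - (⌊F / (Δ * r)⌋₊ : ℝ))) ≤ F / (r * p) + Δ * (1 - p) / p := by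
  set x := F / (Δ * r) with hxdef
  have hx : 0 ≤ x := by positivity
  have hk : (⌊x⌋₊ : ℝ) ≤ x := Nat.floor_le hx
  have hFx : F / (r * p) = Δ * x / p := by
    rw [hxdef]; field_simp
  rw [hFx, ← sub_nonneg]
  split_ifs with hpos
  · have : Δ * x / p + Δ * (1 - p) / p - Δ * ((⌊x⌋₊ : ℝ) / p + (1 - p) / p + (x - ⌊x⌋₊))
        = Δ * (1 - p) * (x - ⌊x⌋₊) / p := by field_simp; ring
    have h2 : (0:ℝ) ≤ 1 - p := by linarith
    rw [this]
    exact div_nonneg (mul_nonneg (mul_nonneg hΔ.le h2) hpos.le) hp.le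
  · have : Δ * x / p + Δ * (1 - p) / p - Δ * ((⌊x⌋₊ : ℝ) / p + 0 + (x - ⌊x⌋₊))
        = (Δ * (1 - p) + Δ * (1 - p) * (x - ⌊x⌋₊)) / p := by field_simp; ring
    rw [this]
    have h1 : 0 ≤ x - ⌊x⌋₊ := by linarith
    have h2 : 0 ≤ 1 - p := by linarith
    positivity

lemma ET_lower' (Δ r p F : ℝ) (hΔ : 0 < Δ) (hr : 0 < r) (hp : 0 < p) (hp1 : p ≤ 1)
    (hF : 0 ≤ F) : F / (r * p) ≤ ET Δ r p F := ET_lower Δ r p F hΔ hr hp hp1 hF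

lemma ET_upper' (Δ r p F : ℝ) (hΔ : 0 < Δ) (hr : 0 < r) (hp : 0 < p) (hp1 : p ≤ 1)
    (hF : 0 ≤ F) : ET Δ r p F ≤ F / (r * p) + Δ * (1 - p) / p :=
  ET_upper Δ r p F hΔ hr hp hp1 hF

/-- If channel `i⋆` uniquely maximizes throughput and `h` is the channel with the
second largest throughput, then for every file size
`F ≥ H = (Δ(1-p_{i⋆})/p_{i⋆}) / (1/(r_h p_h) - 1/(r_{i⋆} p_{i⋆}))`, the
max-throughput channel is static optimal: `E[T(i⋆,F)] ≤ E[T(j,F)]` for all `j`. -/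
theorem max_throughput_static_optimal_above_threshold
    {N : ℕ} (hN : 2 ≤ N) (r p : Fin N → ℝ) (Δ : ℝ) (hΔ : 0 < Δ)
    (hr : ∀ i, 0 < r i) (hp : ∀ i, p i ∈ Set.Ioc (0 : ℝ) 1)
    (istar : Fin N) (hstar : ∀ j, j ≠ istar → r j * p j < r istar * p istar)
    (h : Fin N) (hh : h ≠ istar) (hmax2 : ∀ j, j ≠ istar → r j * p j ≤ r h * p h) :
    ∀ F : ℝ, 0 < F →
      (Δ * (1 - p istar) / p istar) / (1 / (r h * p h) - 1 / (r istar * p istar)) ≤ F →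
      ∀ j : Fin N, ET Δ (r istar) (p istar) F ≤ ET Δ (r j) (p j) F := by
  intro F hF hH j
  by_cases hj : j = istar
  · subst hj; exact le_refl _
  have hps : 0 < p istar := (hp istar).1
  have hps1 : p istar ≤ 1 := (hp istar).2
  have hpj : 0 < p j := (hp j).1
  have hph : 0 < p h := (hp h).1
  have hrpj : 0 < r j * p j := mul_pos (hr j) hpj
  have hrph : 0 < r h * p h := mul_pos (hr h) hph
  have hrps : 0 < r istar * p istar := mul_pos (hr istar) hps
  have hlt : r h * p h < r istar * p istar := hstar h hh
  have hden : 0 < 1 / (r h * p h) - 1 / (r istar * p istar) := by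
    rw [sub_pos]
    exact one_div_lt_one_div_of_lt hrph hlt
  have hHF : Δ * (1 - p istar) / p istar ≤ F * (1 / (r h * p h) - 1 / (r istar * p istar)) := by
    rw [div_le_iff₀ hden] at hH
    linarith
  have key : F / (r istar * p istar) + Δ * (1 - p istar) / p istar ≤ F / (r h * p h) := by
    have : F * (1 / (r h * p h) - 1 / (r istar * p istar))
        = F / (r h * p h) - F / (r istar * p istar) := by ring
    linarith [hHF.trans_eq this]
  have step : F / (r h * p h) ≤ F / (r j * p j) :=
    div_le_div_of_nonneg_left hF.le hrpj (hmax2 j hj)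
  calc ET Δ (r istar) (p istar) F
      ≤ F / (r istar * p istar) + Δ * (1 - p istar) / p istar :=
        ET_upper' Δ _ _ F hΔ (hr istar) hps hps1 hF.le
    _ ≤ F / (r h * p h) := key
    _ ≤ F / (r j * p j) := step
    _ ≤ ET Δ (r j) (p j) F := ET_lower' Δ _ _ F hΔ (hr j) hpj (hp j).2 hF.le
end

section
/- Let N channels have rates r_i > 0 and availability probabilities p_i ∈ (0,1], let Δ > 0, and let i* satisfy r_{i*} p_{i*} ≥ r_j p_j for all j. If the file size is an integer multiple of Δ r_{i*}, i.e., F = k·Δ·r_{i*} for some positive integer k, then E[T(i*,F)] = F/(r_{i*} p_{i*}) and E[T(i*,F)] ≤ E[T(j,F)] for every channel j; that is, the max-throughput channel is static optimal for such F. -/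
lemma ET_ge (Δ r p F : ℝ) (hΔ : 0 < Δ) (hr : 0 < r) (hp0 : 0 < p) (hp1 : p ≤ 1)
    (hF : 0 ≤ F) : F / (r * p) ≤ ET Δ r p F := by
  have hx : 0 ≤ F / (Δ * r) := div_nonneg hF (by positivity)
  set x := F / (Δ * r) with hxdef
  have hm : (⌊x⌋₊ : ℝ) ≤ x := Nat.floor_le hx
  have hm1 : x < (⌊x⌋₊ : ℝ) + 1 := Nat.lt_floor_add_one x
  have hkey : F / (r * p) = Δ * x / p := by
    field_simp [hxdef]
    rw [hxdef]; field_simp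
  rw [hkey, ET]
  by_cases hα : 0 < x - (⌊x⌋₊ : ℝ)
  · rw [if_pos hα]
    simp only [← hxdef]
    rw [div_le_iff₀ hp0]
    have h1 : 0 ≤ 1 - p := by linarith
    have h2 : x - (⌊x⌋₊ : ℝ) < 1 := by linarith
    have hexp : Δ * ((⌊x⌋₊ : ℝ) / p + (1 - p) / p + (x - (⌊x⌋₊ : ℝ))) * p
        = Δ * ((⌊x⌋₊ : ℝ) + (1 - p) + (x - (⌊x⌋₊ : ℝ)) * p) := by
      field_simp
    rw [hexp]
    nlinarith [mul_nonneg (mul_nonneg hΔ.le h1) (by linarith : (0:ℝ) ≤ 1 - (x - (⌊x⌋₊:ℝ)))]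
  · rw [if_neg hα]
    have hα0 : x - (⌊x⌋₊ : ℝ) = 0 := le_antisymm (not_lt.1 hα) (by linarith)
    have hx' : x = (⌊x⌋₊ : ℝ) := by linarith
    simp only [← hxdef]
    rw [hα0, ← hx']
    exact le_of_eq (by ring)

/-- If `i⋆` is a max-throughput channel and the file size is an integer multiple of
`Δ r_{i⋆}`, i.e. `F = k Δ r_{i⋆}` with `k` a positive integer, then
`E[T(i⋆,F)] = F/(r_{i⋆} p_{i⋆})` and channel `i⋆` is static optimal. -/
theorem max_throughput_static_optimal_at_multiples
    {N : ℕ} (r p : Fin N → ℝ) (Δ : ℝ) (hΔ : 0 < Δ)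
    (hr : ∀ i, 0 < r i) (hp : ∀ i, p i ∈ Set.Ioc (0 : ℝ) 1)
    (istar : Fin N) (hstar : ∀ j, r j * p j ≤ r istar * p istar)
    (k : ℕ) (hk : 0 < k) (F : ℝ) (hF : F = (k : ℝ) * Δ * r istar) :
    ET Δ (r istar) (p istar) F = F / (r istar * p istar) ∧
      ∀ j : Fin N, ET Δ (r istar) (p istar) F ≤ ET Δ (r j) (p j) F := by
  obtain ⟨hp0, hp1⟩ := hp istar
  have hrs := hr istar
  have hxk : F / (Δ * r istar) = (k : ℝ) := by
    rw [hF]; field_simp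
  have hfloor : (⌊F / (Δ * r istar)⌋₊ : ℝ) = (k : ℝ) := by
    rw [hxk, Nat.floor_natCast]
  have heq : ET Δ (r istar) (p istar) F = F / (r istar * p istar) := by
    rw [ET, hxk, Nat.floor_natCast]
    rw [if_neg (by simp)]
    rw [hF]
    field_simp
    ring
  refine ⟨heq, fun j => ?_⟩
  obtain ⟨hpj0, hpj1⟩ := hp j
  have hF0 : 0 ≤ F := by
    rw [hF]; positivity
  have h1 : F / (r j * p j) ≤ ET Δ (r j) (p j) F :=
    ET_ge Δ (r j) (p j) F hΔ (hr j) hpj0 hpj1 hF0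
  have h2 : F / (r istar * p istar) ≤ F / (r j * p j) :=
    div_le_div_of_nonneg_left hF0 (mul_pos (hr j) hpj0) (hstar j)
  rw [heq]
  exact h2.trans h1
end

section
/- Let N ≥ 2 channels have rates r_i > 0 and availability probabilities p_i ∈ (0,1], let Δ > 0, and suppose channel i* uniquely maximizes throughput (r_{i*} p_{i*} > r_j p_j for all j ≠ i*) with p_{i*} < 1. Set m_i = p_i/p_{i*} for i ≠ i*, and let E[T(i_so,F)] = min_j E[T(j,F)]. Then for any file size F with kΔr_{i*} < F < (k+1)Δr_{i*} for some k ∈ ℕ, E[T(i_so,F)]/E[T(i*,F)] ≤ min_{i ≠ i*} min{ 1, ( F/(Δ r_i p_i) + (1−p_i)/p_i ) / ( (k+1)(m_i/p_i − 1) ) }. -/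
/-- Performance of the static optimal policy against the max-throughput policy:
if `i⋆` uniquely maximizes throughput, `p_{i⋆} < 1`, `m_i = p_i/p_{i⋆}`, and
`kΔr_{i⋆} < F < (k+1)Δr_{i⋆}`, then with `E[T(i_so,F)] = min_j E[T(j,F)]`,
`E[T(i_so,F)]/E[T(i⋆,F)] ≤ min_{i ≠ i⋆} min{1, (F/(Δ r_i p_i) + (1-p_i)/p_i) /
((k+1)(m_i/p_i - 1))}`. -/
theorem static_optimal_vs_max_throughput_ratio
    {N : ℕ} (hN : 2 ≤ N) (r p : Fin N → ℝ) (Δ : ℝ) (hΔ : 0 < Δ)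
    (hr : ∀ i, 0 < r i) (hp : ∀ i, p i ∈ Set.Ioc (0 : ℝ) 1)
    (istar : Fin N) (hstar : ∀ j, j ≠ istar → r j * p j < r istar * p istar)
    (hpstar : p istar < 1)
    (F : ℝ) (k : ℕ) (hFlb : (k : ℝ) * Δ * r istar < F)
    (hFub : F < ((k : ℝ) + 1) * Δ * r istar) :
    (⨅ j : Fin N, ET Δ (r j) (p j) F) / ET Δ (r istar) (p istar) F
      ≤ ⨅ i : {j : Fin N // j ≠ istar},
          min 1 ((F / (Δ * r i * p i) + (1 - p i) / p i)
            / (((k : ℝ) + 1) * ((p i / p istar) / p i - 1))) := by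
  have hp0 : ∀ i, 0 < p i := fun i => (hp i).1
  have hp1 : ∀ i, p i ≤ 1 := fun i => (hp i).2
  have hrs := hr istar
  have hps := hp0 istar
  have hF : 0 < F := lt_of_le_of_lt (mul_nonneg (mul_nonneg (Nat.cast_nonneg k) hΔ.le) hrs.le) hFlb
  -- istar floor analysis
  set x := F / (Δ * r istar) with hx
  have hxk : (k : ℝ) < x := by
    rw [hx, lt_div_iff₀ (by positivity)]; nlinarith
  have hxk1 : x < (k : ℝ) + 1 := by
    rw [hx, div_lt_iff₀ (by positivity)]; nlinarith
  have hfloor : ⌊x⌋₊ = k := by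
    rw [Nat.floor_eq_iff (by positivity : (0:ℝ) ≤ x)]
    exact ⟨hxk.le, by exact_mod_cast hxk1⟩
  have hETstar : ET Δ (r istar) (p istar) F
      = Δ * ((k : ℝ) / p istar + (1 - p istar) / p istar + (x - k)) := by
    simp only [ET, ← hx, hfloor, if_pos (sub_pos.2 hxk)]
  have hB' : 0 < ((k : ℝ) + 1) * (1 / p istar - 1) := by
    have h : 1 / p istar - 1 = (1 - p istar) / p istar := by field_simp
    have h2 : (0:ℝ) < (1 - p istar) / p istar := div_pos (by linarith) hps
    rw [h]; positivity
  have hBstar : Δ * (((k : ℝ) + 1) * (1 / p istar - 1)) ≤ ET Δ (r istar) (p istar) F := by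
    rw [hETstar]
    apply mul_le_mul_of_nonneg_left _ hΔ.le
    have h1 : (k : ℝ) / p istar + (1 - p istar) / p istar = ((k : ℝ) + 1) / p istar - 1 := by
      field_simp; ring
    have h2 : ((k : ℝ) + 1) * (1 / p istar - 1) = ((k : ℝ) + 1) / p istar - ((k:ℝ)+1) := by
      field_simp
    have hk0 : (0:ℝ) ≤ k := Nat.cast_nonneg k
    rw [h1, h2]; linarith
  have hETstarpos : 0 < ET Δ (r istar) (p istar) F :=
    lt_of_lt_of_le (by positivity) hBstar
  -- upper bound on each ET
  have hETle : ∀ i, ET Δ (r i) (p i) F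
      ≤ Δ * (F / (Δ * r i * p i) + (1 - p i) / p i) := by
    intro i
    have hpi := hp0 i
    have hri := hr i
    set y := F / (Δ * r i) with hy
    have hyfl : (⌊y⌋₊ : ℝ) ≤ y := Nat.floor_le (by positivity)
    have hrw : F / (Δ * r i * p i) = y / p i := by
      rw [hy, div_div, mul_assoc]
    rw [hrw]
    simp only [ET, ← hy]
    apply mul_le_mul_of_nonneg_left _ hΔ.le
    have hind : (if 0 < y - (⌊y⌋₊:ℝ) then (1 - p i)/p i else 0) ≤ (1 - p i)/p i := by
      split
      · exact le_refl _
      · have : (0:ℝ) ≤ (1 - p i)/p i := by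
          apply div_nonneg (by linarith [hp1 i]) hpi.le
        exact this
    have hα : y - (⌊y⌋₊:ℝ) ≤ (y - (⌊y⌋₊:ℝ)) / p i :=
      le_div_self (by linarith) hpi (hp1 i)
    have hsum : (⌊y⌋₊:ℝ)/p i + (y - (⌊y⌋₊:ℝ))/p i = y / p i := by
      rw [← add_div]; ring_nf
    linarith
  have hET0 : ∀ i, 0 ≤ ET Δ (r i) (p i) F := by
    intro i
    have hpi := hp0 i
    have hri := hr i
    apply mul_nonneg hΔ.le
    have h1 : (0:ℝ) ≤ (⌊F / (Δ * r i)⌋₊ : ℝ) / p i := by positivity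
    have h2 : (0:ℝ) ≤ (if 0 < F / (Δ * r i) - (⌊F / (Δ * r i)⌋₊ : ℝ)
        then (1 - p i)/p i else 0) := by
      split
      · exact div_nonneg (by linarith [hp1 i]) hpi.le
      · exact le_refl 0
    have h3 : (0:ℝ) ≤ F / (Δ * r i) - (⌊F / (Δ * r i)⌋₊ : ℝ) :=
      sub_nonneg.2 (Nat.floor_le (by positivity))
    linarith
  have hinf_le : ∀ j, (⨅ j : Fin N, ET Δ (r j) (p j) F) ≤ ET Δ (r j) (p j) F :=
    fun j => ciInf_le (Set.Finite.bddBelow (Set.finite_range _)) j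
  have hnt : Nontrivial (Fin N) := Fin.nontrivial_iff_two_le.mpr hN
  obtain ⟨j0, hj0⟩ := exists_ne istar
  have : Nonempty {j : Fin N // j ≠ istar} := ⟨⟨j0, hj0⟩⟩
  apply le_ciInf
  rintro ⟨i, hi⟩
  apply le_min
  · rw [div_le_one hETstarpos]
    exact hinf_le istar
  · have hpi := hp0 i
    have hrw : (p i / p istar) / p i = 1 / p istar := by
      field_simp
    rw [hrw]
    have hA0 : 0 ≤ F / (Δ * r i * p i) + (1 - p i) / p i := by
      have := hr i
      have : (0:ℝ) ≤ F / (Δ * r i * p i) := by positivity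
      have := div_nonneg (by linarith [hp1 i] : (0:ℝ) ≤ 1 - p i) hpi.le
      linarith
    calc (⨅ j : Fin N, ET Δ (r j) (p j) F) / ET Δ (r istar) (p istar) F
        ≤ (Δ * (F / (Δ * r i * p i) + (1 - p i) / p i))
            / (Δ * (((k : ℝ) + 1) * (1 / p istar - 1))) := by
          apply div_le_div₀ (by positivity) ((hinf_le i).trans (hETle i))
            (by positivity) hBstar
      _ = (F / (Δ * r i * p i) + (1 - p i) / p i)
            / (((k : ℝ) + 1) * (1 / p istar - 1)) :=
          mul_div_mul_left _ _ (ne_of_gt hΔ)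
end

section
/- Let N channels have rates r_i > 0 and availability probabilities p_i ∈ (0,1], let Δ > 0, and let i* satisfy r_{i*} p_{i*} ≥ r_j p_j for all j. Then for any file size F > 0 and any dynamic policy π ∈ Π(F) with closed-form expected time E[T(π,F)] = Δ( Σ_{n=1}^{L−1} 1/p_{π(n)} + (1−p_{π(L)})/p_{π(L)} ) + F_L/r_{π(L)}, it holds that E[T(π,F)] ≥ F/(r_{i*} p_{i*}). -/
/-- A dynamic policy for transferring a file of size `F` over `N` channels with rates
`r` in slots of duration `Δ`: a finite sequence of channel choices `chan 0, …, chan (L-1)`,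
one per successful transmission, such that the remaining file size is positive before
each transmission and the last transmission finishes the file. -/
structure Policy (N : ℕ) (r : Fin N → ℝ) (Δ F : ℝ) where
  L : ℕ
  hL : 0 < L
  chan : ℕ → Fin N
  pos : ∀ n < L, 0 < F - Δ * ∑ m ∈ Finset.range n, r (chan m)
  last : F - Δ * ∑ m ∈ Finset.range (L - 1), r (chan m) ≤ Δ * r (chan (L - 1))

/-- Closed-form expected transfer time of a dynamic policy `π`:
`E[T(π,F)] = Δ(∑_{n=1}^{L-1} 1/p_{π(n)} + (1 - p_{π(L)})/p_{π(L)}) + F_L/r_{π(L)}`. -/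
noncomputable def ETdyn {N : ℕ} {r : Fin N → ℝ} {Δ F : ℝ} (p : Fin N → ℝ)
    (π : Policy N r Δ F) : ℝ :=
  Δ * ((∑ n ∈ Finset.range (π.L - 1), 1 / p (π.chan n))
      + (1 - p (π.chan (π.L - 1))) / p (π.chan (π.L - 1)))
    + (F - Δ * ∑ m ∈ Finset.range (π.L - 1), r (π.chan m)) / r (π.chan (π.L - 1))

/-- For any file size `F > 0` and any dynamic policy `π ∈ Π(F)`, the expected transfer
time is at least `F/(r_{i⋆} p_{i⋆})`, where `i⋆` is a max-throughput channel. -/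
theorem dynamic_policy_lower_bound
    {N : ℕ} (r p : Fin N → ℝ) (Δ F : ℝ) (hΔ : 0 < Δ) (hF : 0 < F)
    (hr : ∀ i, 0 < r i) (hp : ∀ i, p i ∈ Set.Ioc (0 : ℝ) 1)
    (istar : Fin N) (hstar : ∀ j, r j * p j ≤ r istar * p istar)
    (π : Policy N r Δ F) :
    F / (r istar * p istar) ≤ ETdyn p π := by
  classical
  set c := r istar * p istar with hc_def
  have hc : 0 < c := mul_pos (hr istar) (hp istar).1
  set L := π.L
  set q := p (π.chan (L - 1)) with hq_def
  set s := r (π.chan (L - 1)) with hs_def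
  have hq0 : 0 < q := (hp _).1
  have hq1 : q ≤ 1 := (hp _).2
  have hs0 : 0 < s := hr _
  set S := ∑ m ∈ Finset.range (L - 1), r (π.chan m) with hS_def
  set FL := F - Δ * S with hFL_def
  have hFLpos : 0 < FL := π.pos (L - 1) (Nat.sub_lt π.hL one_pos)
  have hFLle : FL ≤ Δ * s := π.last
  have hsum : S / c ≤ ∑ n ∈ Finset.range (L - 1), 1 / p (π.chan n) := by
    rw [hS_def, Finset.sum_div]
    apply Finset.sum_le_sum
    intro n _
    rw [div_le_div_iff₀ hc (hp (π.chan n)).1]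
    calc r (π.chan n) * p (π.chan n) ≤ c := hstar _
    _ = c * 1 := (mul_one c).symm
    _ ≤ _ := by nlinarith [ (hp (π.chan n)).1 ]
  have hsq : s * q ≤ c := hstar _
  have key : FL / c ≤ Δ * ((1 - q) / q) + FL / s := by
    have h1 : FL / c ≤ FL / (s * q) :=
      div_le_div_of_nonneg_left hFLpos.le (mul_pos hs0 hq0) hsq
    have h2 : FL / (s * q) ≤ Δ * ((1 - q) / q) + FL / s := by
      have heq : Δ * ((1 - q) / q) + FL / s - FL / (s * q)
          = (Δ * s - FL) * (1 - q) / (s * q) := by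
        field_simp; ring
      have hnn : 0 ≤ (Δ * s - FL) * (1 - q) / (s * q) :=
        div_nonneg (mul_nonneg (by linarith) (by linarith)) (mul_pos hs0 hq0).le
      linarith
    linarith
  have hF_split : F = Δ * S + FL := by rw [hFL_def]; ring
  have : F / c = (Δ * S) / c + FL / c := by rw [hF_split, add_div]
  rw [ETdyn]
  have hDS : Δ * S / c = Δ * (S / c) := by ring
  calc F / c = (Δ * S) / c + FL / c := this
    _ ≤ Δ * (S / c) + (Δ * ((1 - q) / q) + FL / s) := by
        rw [hDS]; exact add_le_add le_rfl key
    _ ≤ Δ * ((∑ n ∈ Finset.range (L - 1), 1 / p (π.chan n)) + (1 - q) / q) + FL / s := by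
        have := mul_le_mul_of_nonneg_left hsum hΔ.le
        ring_nf
        ring_nf at this
        linarith
    _ = _ := by rw [hFL_def, hS_def]
end

section
/- Let N channels have rates r_i > 0 and availability probabilities p_i ∈ (0,1], let Δ > 0, and let i* satisfy r_{i*} p_{i*} ≥ r_j p_j for all j. If F = k·Δ·r_{i*} for some positive integer k, then the static policy that uses channel i* for all k transmissions lies in Π(F), its expected transfer time equals F/(r_{i*} p_{i*}), and it minimizes E[T(π,F)] over all π ∈ Π(F); that is, the max-throughput policy coincides with a dynamic optimal policy at such file sizes. -/
/-- If the file size is an integer multiple of `Δ r_{i⋆}`, i.e. `F = k Δ r_{i⋆}` with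
`k ∈ ℤ_+`, then the static policy using the max-throughput channel `i⋆` for all `k`
transmissions is a valid dynamic policy, its expected transfer time equals
`F/(r_{i⋆} p_{i⋆})`, and it minimizes the expected transfer time over all dynamic
policies. -/
theorem max_throughput_dynamic_optimal_at_multiples
    {N : ℕ} (r p : Fin N → ℝ) (Δ : ℝ) (hΔ : 0 < Δ)
    (hr : ∀ i, 0 < r i) (hp : ∀ i, p i ∈ Set.Ioc (0 : ℝ) 1)
    (istar : Fin N) (hstar : ∀ j, r j * p j ≤ r istar * p istar)
    (k : ℕ) (hk : 0 < k) (F : ℝ) (hF : F = (k : ℝ) * Δ * r istar) :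
    ∃ π₀ : Policy N r Δ F,
      π₀.L = k ∧ (∀ n, π₀.chan n = istar) ∧
      ETdyn p π₀ = F / (r istar * p istar) ∧
      ∀ π : Policy N r Δ F, ETdyn p π₀ ≤ ETdyn p π := by
  have hps := fun i => (hp i).1
  have hp1 := fun i => (hp i).2
  have hc : 0 < r istar * p istar := mul_pos (hr istar) (hps istar)
  have key : ∀ i, r i / (r istar * p istar) ≤ 1 / p i := by
    intro i
    rw [div_le_div_iff₀ hc (hps i)]
    nlinarith [hstar i]
  have hk1 : ((k - 1 : ℕ) : ℝ) = (k : ℝ) - 1 := by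
    rw [Nat.cast_sub hk]; norm_num
  refine ⟨⟨k, hk, fun _ => istar, ?_, ?_⟩, rfl, fun n => rfl, ?_, ?_⟩
  · intro n hn
    simp only [Finset.sum_const, Finset.card_range, nsmul_eq_mul, hF]
    have : (n : ℝ) < (k : ℝ) := by exact_mod_cast hn
    nlinarith [mul_pos (mul_pos hΔ (hr istar)) (sub_pos.2 this)]
  · simp only [Finset.sum_const, Finset.card_range, nsmul_eq_mul, hF, hk1]
    exact le_of_eq (by ring)
  · simp only [ETdyn, Finset.sum_const, Finset.card_range, nsmul_eq_mul, hF, hk1]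
    have h1 : p istar ≠ 0 := (hps istar).ne'
    have h2 : r istar ≠ 0 := (hr istar).ne'
    field_simp
    ring
  · intro π
    have hval : ETdyn p (⟨k, hk, fun _ => istar, by
        intro n hn
        simp only [Finset.sum_const, Finset.card_range, nsmul_eq_mul, hF]
        have : (n : ℝ) < (k : ℝ) := by exact_mod_cast hn
        nlinarith [mul_pos (mul_pos hΔ (hr istar)) (sub_pos.2 this)], by
        simp only [Finset.sum_const, Finset.card_range, nsmul_eq_mul, hF, hk1]
        exact le_of_eq (by ring)⟩ : Policy N r Δ F) = F / (r istar * p istar) := by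
      simp only [ETdyn, Finset.sum_const, Finset.card_range, nsmul_eq_mul, hF, hk1]
      have h1 : p istar ≠ 0 := (hps istar).ne'
      have h2 : r istar ≠ 0 := (hr istar).ne'
      field_simp
      ring
    rw [hval]
    set c := r istar * p istar with hcdef
    set l := π.chan (π.L - 1) with hl
    set S := Δ * ∑ m ∈ Finset.range (π.L - 1), r (π.chan m) with hS
    have hFL : 0 < F - S := π.pos (π.L - 1) (Nat.sub_lt π.hL one_pos)
    have hlast : F - S ≤ Δ * r l := π.last
    set FL := F - S with hFLdef
    have hsum : Δ * ((∑ n ∈ Finset.range (π.L - 1), r (π.chan n)) / c)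
        ≤ Δ * ∑ n ∈ Finset.range (π.L - 1), 1 / p (π.chan n) := by
      apply mul_le_mul_of_nonneg_left _ hΔ.le
      rw [Finset.sum_div]
      exact Finset.sum_le_sum fun n _ => key _
    have hSc : S / c ≤ Δ * ∑ n ∈ Finset.range (π.L - 1), 1 / p (π.chan n) := by
      rw [hS, mul_div_assoc]
      exact hsum
    have hlastterm : FL / c ≤ Δ * ((1 - p l) / p l) + FL / r l := by
      have hpl := hps l
      have hpl1 := hp1 l
      have hrl := hr l
      have hrlpl : r l * p l ≤ c := hstar l
      rw [mul_div_assoc', div_add_div _ _ hpl.ne' hrl.ne', div_le_div_iff₀ hc (mul_pos hpl hrl)]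
      rcases le_or_gt (r l) c with h | h
      · nlinarith [mul_nonneg (mul_pos hFL hpl).le (sub_nonneg.2 h),
          mul_nonneg (mul_nonneg hΔ.le (sub_nonneg.2 hpl1)) (mul_pos hrl hc).le]
      · nlinarith [mul_nonneg (sub_nonneg.2 hlast) (mul_nonneg hpl.le (sub_nonneg.2 h.le)),
          mul_nonneg (mul_pos hΔ hrl).le (sub_nonneg.2 hrlpl)]
    have hFc : F / c = S / c + FL / c := by
      rw [← add_div, hFLdef]; ring_nf
    unfold ETdyn
    rw [hFc]
    have : Δ * ((∑ n ∈ Finset.range (π.L - 1), 1 / p (π.chan n)) + (1 - p l) / p l)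
        = Δ * ∑ n ∈ Finset.range (π.L - 1), 1 / p (π.chan n) + Δ * ((1 - p l) / p l) := by
      ring
    rw [this]
    linarith [hSc, hlastterm]
end

section
/- Let N channels have rates r_i > 0 and availability probabilities p_i ∈ (0,1], let Δ > 0, and suppose channel i* uniquely maximizes throughput (r_{i*} p_{i*} > r_j p_j for all j ≠ i*). Let F satisfy kΔr_{i*} < F < (k+1)Δr_{i*} for some k ∈ ℕ, and let E[T(π*,F)] = min_{π ∈ Π(F)} E[T(π,F)]. Then E[T(π*,F)] / E[T(i*,F)] ≥ F / ( F + Δ(1−p_{i*}) r_{i*} ), where E[T(i*,F)] is the expected static transfer time of channel i*. -/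
/-- Lower bound on the performance of the dynamic optimal policy relative to the
max-throughput policy: if `i⋆` uniquely maximizes throughput and
`kΔr_{i⋆} < F < (k+1)Δr_{i⋆}`, then, with `E[T(π⋆,F)] = min_{π ∈ Π(F)} E[T(π,F)]`,
`E[T(π⋆,F)]/E[T(i⋆,F)] ≥ F/(F + Δ(1-p_{i⋆})r_{i⋆})`. -/
theorem dynamic_optimal_ratio_lower_bound
    {N : ℕ} (r p : Fin N → ℝ) (Δ : ℝ) (hΔ : 0 < Δ)
    (hr : ∀ i, 0 < r i) (hp : ∀ i, p i ∈ Set.Ioc (0 : ℝ) 1)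
    (istar : Fin N) (hstar : ∀ j, j ≠ istar → r j * p j < r istar * p istar)
    (F : ℝ) (k : ℕ) (hFlb : (k : ℝ) * Δ * r istar < F)
    (hFub : F < ((k : ℝ) + 1) * Δ * r istar)
    (Topt : ℝ)
    (hopt : IsLeast {t : ℝ | ∃ π : Policy N r Δ F, t = ETdyn p π} Topt) :
    F / (F + Δ * (1 - p istar) * r istar)
      ≤ Topt / ET Δ (r istar) (p istar) F := by
  obtain ⟨⟨π, hT⟩, -⟩ := hopt
  have hRpos : 0 < r istar := hr istar
  have hPpos : 0 < p istar := (hp istar).1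
  have hP1 : p istar ≤ 1 := (hp istar).2
  have hC : 0 < r istar * p istar := mul_pos hRpos hPpos
  have hF : 0 < F := lt_of_le_of_lt (by positivity) hFlb
  have hΔR : 0 < Δ * r istar := mul_pos hΔ hRpos
  have hfl1 : (k : ℝ) < F / (Δ * r istar) := by
    rw [lt_div_iff₀ hΔR]; nlinarith
  have hfl2 : F / (Δ * r istar) < (k : ℝ) + 1 := by
    rw [div_lt_iff₀ hΔR]; nlinarith
  have hfloor : (⌊F / (Δ * r istar)⌋₊ : ℝ) = k := by
    have h : ⌊F / (Δ * r istar)⌋₊ = k := by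
      rw [Nat.floor_eq_iff (le_of_lt (div_pos hF hΔR))]
      exact ⟨hfl1.le, by exact_mod_cast hfl2⟩
    exact_mod_cast h
  set α : ℝ := F / (Δ * r istar) - (k : ℝ) with hαdef
  have hα0 : 0 < α := by rw [hαdef]; linarith
  have hα1 : α < 1 := by rw [hαdef]; linarith
  have hFeq : F = Δ * r istar * ((k : ℝ) + α) := by
    rw [hαdef]; field_simp; ring
  have hETeq : ET Δ (r istar) (p istar) F
      = Δ * ((k : ℝ) / p istar + (1 - p istar) / p istar + α) := by
    rw [ET, hfloor, ← hαdef, if_pos hα0]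
  have hk0 : (0:ℝ) ≤ (k:ℝ) / p istar := div_nonneg (Nat.cast_nonneg k) hPpos.le
  have hp0 : (0:ℝ) ≤ (1 - p istar) / p istar := div_nonneg (by linarith) hPpos.le
  have hETpos : 0 < ET Δ (r istar) (p istar) F := by
    rw [hETeq]; nlinarith
  have hETle : ET Δ (r istar) (p istar) F
      ≤ (F + Δ * (1 - p istar) * r istar) / (r istar * p istar) := by
    rw [hETeq, le_div_iff₀ hC]
    have hPne : p istar ≠ 0 := hPpos.ne'
    have key : Δ * ((k : ℝ) / p istar + (1 - p istar) / p istar + α) * (r istar * p istar)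
        = Δ * r istar * ((k : ℝ) + (1 - p istar) + α * p istar) := by
      field_simp
    rw [key, hFeq]
    nlinarith [mul_nonneg (mul_nonneg hΔ.le hRpos.le)
      (mul_nonneg hα0.le (sub_nonneg.2 hP1))]
  -- key lower bound on any dynamic policy
  have hjle : ∀ j, r j * p j ≤ r istar * p istar := by
    intro j
    by_cases h : j = istar
    · subst h; exact le_rfl
    · exact (hstar j h).le
  have hkey : F / (r istar * p istar) ≤ ETdyn p π := by
    set L := π.L with hLdef
    set c := π.chan with hcdef
    have hL : 0 < L := π.hL
    set S := ∑ m ∈ Finset.range (L - 1), r (c m) with hSdef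
    have hFL : 0 < F - Δ * S := π.pos (L - 1) (Nat.sub_lt hL one_pos)
    have hlast : F - Δ * S ≤ Δ * r (c (L - 1)) := π.last
    set q := p (c (L - 1)) with hqdef
    set s := r (c (L - 1)) with hsdef
    have hq : 0 < q := (hp _).1
    have hq1 : q ≤ 1 := (hp _).2
    have hs : 0 < s := hr _
    have hsum : S / (r istar * p istar) ≤ ∑ n ∈ Finset.range (L - 1), 1 / p (c n) := by
      rw [hSdef, Finset.sum_div]
      apply Finset.sum_le_sum
      intro n _
      rw [div_le_div_iff₀ hC (hp (c n)).1]
      have := hjle (c n)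
      linarith
    have h2 : (F - Δ * S) / (s * q) ≤ Δ * ((1 - q) / q) + (F - Δ * S) / s := by
      rw [mul_div_assoc', div_add_div _ _ (ne_of_gt hq) (ne_of_gt hs),
        div_le_div_iff₀ (mul_pos hs hq) (mul_pos hq hs)]
      nlinarith [mul_nonneg (mul_nonneg (mul_pos hs hq).le (sub_nonneg.2 hq1))
        (sub_nonneg.2 hlast)]
    have h1 : (F - Δ * S) / (r istar * p istar) ≤ (F - Δ * S) / (s * q) :=
      div_le_div_of_nonneg_left hFL.le (mul_pos hs hq) (hjle (c (L - 1)))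
    have hcomb : (F - Δ * S) / (r istar * p istar)
        ≤ Δ * ((1 - q) / q) + (F - Δ * S) / s := le_trans h1 h2
    have hΔsum : Δ * (S / (r istar * p istar))
        ≤ Δ * ∑ n ∈ Finset.range (L - 1), 1 / p (c n) :=
      mul_le_mul_of_nonneg_left hsum hΔ.le
    have hEq : ETdyn p π
        = Δ * (∑ n ∈ Finset.range (L - 1), 1 / p (c n)) + Δ * ((1 - q) / q)
          + (F - Δ * S) / s := by
      rw [ETdyn]; ring
    rw [hEq]
    have hsplit : F / (r istar * p istar)
        = Δ * (S / (r istar * p istar)) + (F - Δ * S) / (r istar * p istar) := by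
      rw [mul_div_assoc', ← add_div]
      ring_nf
    rw [hsplit]
    linarith
  have hTopt : F / (r istar * p istar) ≤ Topt := hT ▸ hkey
  have hToptpos : 0 < Topt := lt_of_lt_of_le (div_pos hF hC) hTopt
  have hD : 0 < F + Δ * (1 - p istar) * r istar :=
    add_pos_of_pos_of_nonneg hF
      (mul_nonneg (mul_nonneg hΔ.le (by linarith : (0:ℝ) ≤ 1 - p istar)) hRpos.le)
  have step1 : Topt / ((F + Δ * (1 - p istar) * r istar) / (r istar * p istar))
      ≤ Topt / ET Δ (r istar) (p istar) F :=
    div_le_div_of_nonneg_left hToptpos.le hETpos hETle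
  refine le_trans ?_ step1
  rw [div_div_eq_mul_div, div_le_div_iff₀ hD hD]
  have hFle : F ≤ Topt * (r istar * p istar) := (div_le_iff₀ hC).1 hTopt
  exact mul_le_mul_of_nonneg_right hFle hD.le
end

section
/- Let N ≥ 2 channels have rates r_i > 0 and availability probabilities p_i ∈ (0,1], let Δ > 0, and suppose channel i* uniquely maximizes throughput (r_{i*} p_{i*} > r_j p_j for all j ≠ i*) with p_{i*} < 1. Set m_i = p_i/p_{i*}, and let F satisfy kΔr_{i*} < F < (k+1)Δr_{i*} for some k ∈ ℕ. With E[T(π*,F)] = min_{π ∈ Π(F)} E[T(π,F)], it holds that E[T(π*,F)] / E[T(i*,F)] ≤ min_{i ≠ i*} min{ 1, ( F/(Δ r_i) + 1 − p_i − k·m_i·(r_{i*}p_{i*} − r_i p_i)/(r_i p_i) ) / ( (k+1)(m_i − p_i) ) }. -/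
lemma sum_if_lt' (k s : ℕ) (x y : ℝ) :
    ∑ m ∈ Finset.range (k + s), (if m < k then x else y) = k * x + s * y := by
  induction s with
  | zero =>
    simp only [Nat.add_zero, Nat.cast_zero, zero_mul, add_zero]
    rw [Finset.sum_congr rfl (fun m hm => if_pos (Finset.mem_range.mp hm))]
    simp [mul_comm]
  | succ s ih =>
    rw [← Nat.add_assoc, Finset.sum_range_succ, ih, if_neg (by omega)]
    push_cast; ring

lemma sum_if_le' (k n : ℕ) (hn : n ≤ k) (x y : ℝ) :
    ∑ m ∈ Finset.range n, (if m < k then x else y) = n * x := by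
  rw [Finset.sum_congr rfl (fun m hm => if_pos (by have := Finset.mem_range.mp hm; omega))]
  simp [mul_comm]

set_option maxHeartbeats 1000000 in
/-- Upper bound on the performance of the dynamic optimal policy relative to the
max-throughput policy: if `i⋆` uniquely maximizes throughput, `p_{i⋆} < 1`,
`m_i = p_i/p_{i⋆}`, and `kΔr_{i⋆} < F < (k+1)Δr_{i⋆}`, then with
`E[T(π⋆,F)] = min_{π ∈ Π(F)} E[T(π,F)]`,
`E[T(π⋆,F)]/E[T(i⋆,F)] ≤ min_{i ≠ i⋆} min{1,
(F/(Δ r_i) + 1 - p_i - k m_i (r_{i⋆}p_{i⋆} - r_i p_i)/(r_i p_i)) / ((k+1)(m_i - p_i))}`. -/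
theorem dynamic_optimal_ratio_upper_bound
    {N : ℕ} (hN : 2 ≤ N) (r p : Fin N → ℝ) (Δ : ℝ) (hΔ : 0 < Δ)
    (hr : ∀ i, 0 < r i) (hp : ∀ i, p i ∈ Set.Ioc (0 : ℝ) 1)
    (istar : Fin N) (hstar : ∀ j, j ≠ istar → r j * p j < r istar * p istar)
    (hpstar : p istar < 1)
    (F : ℝ) (k : ℕ) (hFlb : (k : ℝ) * Δ * r istar < F)
    (hFub : F < ((k : ℝ) + 1) * Δ * r istar)
    (Topt : ℝ)
    (hopt : IsLeast {t : ℝ | ∃ π : Policy N r Δ F, t = ETdyn p π} Topt) :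
    Topt / ET Δ (r istar) (p istar) F
      ≤ ⨅ i : {j : Fin N // j ≠ istar},
          min 1 ((F / (Δ * r i) + 1 - p i
              - (k : ℝ) * (p i / p istar) * ((r istar * p istar - r i * p i) / (r i * p i)))
            / (((k : ℝ) + 1) * (p i / p istar - p i))) := by
  obtain ⟨hTmem, hTlb⟩ := hopt
  have hps : 0 < p istar := (hp istar).1
  have hrspos : 0 < r istar := hr istar
  have hΔr : 0 < Δ * r istar := mul_pos hΔ hrspos
  have hFpos : 0 < F := lt_of_le_of_lt (by positivity) hFlb
  have hfloor : ⌊F / (Δ * r istar)⌋₊ = k := by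
    rw [Nat.floor_eq_iff (by positivity)]
    constructor
    · rw [le_div_iff₀ hΔr]; nlinarith
    · rw [div_lt_iff₀ hΔr]; nlinarith
  have hαpos : 0 < F / (Δ * r istar) - (k : ℝ) := by
    rw [sub_pos, lt_div_iff₀ hΔr]; nlinarith
  have hA : ET Δ (r istar) (p istar) F
      = Δ * ((k : ℝ) / p istar + (1 - p istar) / p istar + (F / (Δ * r istar) - (k : ℝ))) := by
    unfold ET
    rw [hfloor, if_pos (by rw [hfloor] at *; exact hαpos)]
  have hApos : 0 < ET Δ (r istar) (p istar) F := by
    rw [hA]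
    have h1 : 0 ≤ (k : ℝ) / p istar := by positivity
    have h2 : 0 ≤ (1 - p istar) / p istar := div_nonneg (by linarith) hps.le
    nlinarith
  -- the static policy on istar achieves ET
  have hTA : Topt ≤ ET Δ (r istar) (p istar) F := by
    set π0 : Policy N r Δ F :=
      { L := k + 1
        hL := Nat.succ_pos _
        chan := fun _ => istar
        pos := fun n hn => by
          simp only [Finset.sum_const, Finset.card_range, nsmul_eq_mul]
          have hnk : (n : ℝ) ≤ (k : ℝ) := Nat.cast_le.mpr (Nat.lt_succ_iff.mp hn)
          nlinarith
        last := by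
          simp only [Nat.add_sub_cancel, Finset.sum_const, Finset.card_range, nsmul_eq_mul]
          nlinarith } with hπ0
    have h0 : Topt ≤ ETdyn p π0 := hTlb ⟨π0, rfl⟩
    have h1 : ETdyn p π0 = ET Δ (r istar) (p istar) F := by
      unfold ETdyn
      rw [hA]
      simp only [hπ0, Nat.add_sub_cancel, Finset.sum_const, Finset.card_range, nsmul_eq_mul]
      field_simp
    linarith
  have hne : ∃ j : Fin N, j ≠ istar := by
    have hcard : 1 < Fintype.card (Fin N) := by simp; omega
    exact Fintype.exists_ne_of_one_lt_card hcard istar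
  haveI : Nonempty {j : Fin N // j ≠ istar} := ⟨⟨hne.choose, hne.choose_spec⟩⟩
  refine le_ciInf fun x => le_min ?_ ?_
  · rw [div_le_one hApos]; exact hTA
  · obtain ⟨i, hi⟩ := x
    simp only []
    have hpi : 0 < p i := (hp i).1
    have hpi1 : p i ≤ 1 := (hp i).2
    have hri : 0 < r i := hr i
    have hΔri : 0 < Δ * r i := mul_pos hΔ hri
    set β : ℝ := (F - (k : ℝ) * Δ * r istar) / (Δ * r i) with hβ
    have hβpos : 0 < β := div_pos (by linarith) hΔri
    have hβri : β * (Δ * r i) = F - (k : ℝ) * Δ * r istar := by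
      rw [hβ]; field_simp
    set t : ℕ := ⌈β⌉₊ with htdef
    have htpos : 0 < t := Nat.ceil_pos.mpr hβpos
    have hβt : β ≤ (t : ℝ) := Nat.le_ceil β
    have hβt1 : (t : ℝ) - 1 ≤ β := by
      have := Nat.ceil_lt_add_one hβpos.le
      rw [← htdef] at this
      linarith
    -- the hybrid policy: k slots on istar, then t slots on i
    set π1 : Policy N r Δ F :=
      { L := k + t
        hL := by omega
        chan := fun n => if n < k then istar else i
        pos := fun n hn => by
          simp only [apply_ite r]
          rcases le_or_gt n k with h | h
          · rw [sum_if_le' k n h]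
            have hnk : (n : ℝ) ≤ (k : ℝ) := Nat.cast_le.mpr h
            nlinarith
          · obtain ⟨s, rfl⟩ : ∃ s, n = k + s := ⟨n - k, by omega⟩
            rw [sum_if_lt']
            have hst : s < t := by omega
            have hsβ : (s : ℝ) < β := (Nat.lt_ceil).mp (by rw [← htdef]; exact hst)
            nlinarith [hβri, mul_pos (sub_pos.mpr hsβ) hΔri]
        last := by
          simp only [apply_ite r]
          have hL1 : k + t - 1 = k + (t - 1) := by omega
          rw [hL1, sum_if_lt', if_neg (by omega)]
          have hc : ((t - 1 : ℕ) : ℝ) = (t : ℝ) - 1 := by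
            rw [Nat.cast_sub htpos]; norm_num
          rw [hc]
          nlinarith [hβri, mul_le_mul_of_nonneg_right hβt hΔri.le] } with hπ1
    have hT1 : Topt ≤ ETdyn p π1 := hTlb ⟨π1, rfl⟩
    have hL1 : π1.L - 1 = k + (t - 1) := by simp only [hπ1]; omega
    have hchanlast : π1.chan (π1.L - 1) = i := by
      simp only [hπ1]
      rw [if_neg (by omega)]
    have hc : ((t - 1 : ℕ) : ℝ) = (t : ℝ) - 1 := by
      rw [Nat.cast_sub htpos]; norm_num
    have hE1 : ETdyn p π1 = Δ * ((k : ℝ) * (1 / p istar) + ((t : ℝ) - 1) * (1 / p i)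
          + (1 - p i) / p i)
        + (F - Δ * ((k : ℝ) * r istar + ((t : ℝ) - 1) * r i)) / r i := by
      unfold ETdyn
      rw [hL1]
      have hchan2 : π1.chan (k + (t - 1)) = i := by
        simp only [hπ1]; rw [if_neg (by omega)]
      rw [hchan2]
      have hs1 : ∑ n ∈ Finset.range (k + (t - 1)), 1 / p (π1.chan n)
          = (k : ℝ) * (1 / p istar) + ((t : ℝ) - 1) * (1 / p i) := by
        simp only [hπ1, apply_ite p, apply_ite (fun z : ℝ => 1 / z)]
        rw [sum_if_lt', hc]
      have hs2 : ∑ m ∈ Finset.range (k + (t - 1)), r (π1.chan m)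
          = (k : ℝ) * r istar + ((t : ℝ) - 1) * r i := by
        simp only [hπ1, apply_ite r]
        rw [sum_if_lt', hc]
      rw [hs1, hs2]
    -- upper-bound ETdyn π1
    have hB : ETdyn p π1 ≤ Δ * ((k : ℝ) / p istar + (β + 1 - p i) / p i) := by
      rw [hE1]
      have hlast : (F - Δ * ((k : ℝ) * r istar + ((t : ℝ) - 1) * r i)) / r i
          = (β - ((t : ℝ) - 1)) * Δ := by
        rw [hβ]; field_simp; ring
      rw [hlast]
      have hid : Δ * ((k : ℝ) / p istar + (β + 1 - p i) / p i)
          - (Δ * ((k : ℝ) * (1 / p istar) + ((t : ℝ) - 1) * (1 / p i) + (1 - p i) / p i)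
            + (β - ((t : ℝ) - 1)) * Δ)
          = Δ * (β - ((t : ℝ) - 1)) * (1 - p i) / p i := by
        field_simp
        ring
      have hnn : 0 ≤ Δ * (β - ((t : ℝ) - 1)) * (1 - p i) / p i := by
        apply div_nonneg _ hpi.le
        apply mul_nonneg (mul_nonneg hΔ.le (by linarith)) (by linarith)
      linarith
    -- final algebra
    rw [div_le_iff₀ hApos]
    refine le_trans (le_trans hT1 hB) ?_
    set αv : ℝ := F / (Δ * r istar) - (k : ℝ) with hαv
    set N0 : ℝ := (k : ℝ) * p i + p istar * (β + 1 - p i) with hN0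
    have hN0pos : 0 < N0 := by
      have : 0 < β + 1 - p i := by linarith
      have h1 : 0 ≤ (k : ℝ) * p i := by positivity
      nlinarith
    have h1p : (0 : ℝ) < 1 - p istar := by linarith
    have hXeq : (F / (Δ * r i) + 1 - p i
          - (k : ℝ) * (p i / p istar) * ((r istar * p istar - r i * p i) / (r i * p i)))
          / (((k : ℝ) + 1) * (p i / p istar - p i))
        = N0 / (((k : ℝ) + 1) * p i * (1 - p istar)) := by
      rw [hN0, hβ]
      rw [div_eq_div_iff]
      · field_simp
        ring
      · have h2 : 0 < p i / p istar - p i := by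
          rw [div_sub' hps.ne']
          apply div_pos _ hps
          nlinarith
        positivity
      · positivity
    have hAeq : ET Δ (r istar) (p istar) F
        = Δ * ((k : ℝ) + 1 - p istar + αv * p istar) / p istar := by
      rw [hA, eq_div_iff hps.ne']; field_simp
      try ring
      try tauto
    rw [hXeq, hAeq]
    have e1 : Δ * ((k : ℝ) / p istar + (β + 1 - p i) / p i)
        = (Δ * N0) / (p istar * p i) := by
      rw [hN0]; field_simp
      try ring
      try tauto
    rw [e1, div_mul_div_comm, div_le_div_iff₀ (by positivity) (by positivity)]
    have hkey : N0 * (Δ * ((k : ℝ) + 1 - p istar + αv * p istar)) * (p istar * p i)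
        - Δ * N0 * (((k : ℝ) + 1) * p i * (1 - p istar) * p istar)
        = Δ * N0 * (p istar * p i) * (p istar * (αv + (k : ℝ))) := by ring
    have hnn2 : 0 ≤ Δ * N0 * (p istar * p i) * (p istar * (αv + (k : ℝ))) := by
      have h3 : 0 < αv := hαpos
      have h4 : 0 ≤ (k : ℝ) * p istar := by positivity
      positivity
    linarith
end

section
/- Let N ≥ 2 channels have rates r_i > 0 and availability probabilities p_i ∈ (0,1], let Δ > 0, and let i* satisfy r_{i*} p_{i*} ≥ r_j p_j for all j. For any file size F > 0 and any integer n with 0 ≤ n ≤ ⌊F/(Δ r_{i*})⌋ and F − nΔr_{i*} > 0, the minimum over Π(F) of the expected transfer time satisfies min_{π ∈ Π(F)} E[T(π,F)] ≤ min_{i ≠ i*} { F/(r_i p_i) + Δ( (1−p_i)/p_i − n·(r_{i*}p_{i*} − r_i p_i)/(r_i p_i p_{i*}) ) }, and this upper bound is nonincreasing in n. -/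

lemma sum_if_aux {N : ℕ} (g : Fin N → ℝ) (istar i : Fin N) (n m : ℕ) :
    ∑ k ∈ Finset.range m, g (if k < n then istar else i)
      = (min m n : ℕ) * g istar + ((m - n : ℕ)) * g i := by
  induction m with
  | zero => simp
  | succ m ih =>
    rw [Finset.sum_range_succ, ih]
    by_cases h : m < n
    · rw [if_pos h, Nat.min_eq_left (Nat.succ_le_of_lt h), Nat.min_eq_left h.le,
        Nat.sub_eq_zero_of_le h.le, Nat.sub_eq_zero_of_le (Nat.succ_le_of_lt h)]
      push_cast; ring
    · have h' : n ≤ m := Nat.not_lt.1 h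
      rw [if_neg h, Nat.min_eq_right h', Nat.min_eq_right (h'.trans m.le_succ),
        Nat.succ_sub h']
      push_cast; ring

/-- The heuristic upper bound on the minimum expected transfer time: first transmit
`n` full `Δ r_{i⋆}`-sized blocks on the max-throughput channel `i⋆`, then follow a
single static channel `i ≠ i⋆` for the rest.  For any `0 ≤ n ≤ ⌊F/(Δ r_{i⋆})⌋` with
`F - nΔr_{i⋆} > 0`,
`min_{π ∈ Π(F)} E[T(π,F)] ≤ min_{i ≠ i⋆} {F/(r_i p_i) + Δ((1-p_i)/p_i -
n (r_{i⋆}p_{i⋆} - r_i p_i)/(r_i p_i p_{i⋆}))}`, and this bound is nonincreasing in `n`. -/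
theorem heuristic_upper_bound_nonincreasing
    {N : ℕ} (hN : 2 ≤ N) (r p : Fin N → ℝ) (Δ : ℝ) (hΔ : 0 < Δ)
    (hr : ∀ i, 0 < r i) (hp : ∀ i, p i ∈ Set.Ioc (0 : ℝ) 1)
    (istar : Fin N) (hstar : ∀ j, r j * p j ≤ r istar * p istar)
    (F : ℝ) (hF : 0 < F)
    (Topt : ℝ)
    (hopt : IsLeast {t : ℝ | ∃ π : Policy N r Δ F, t = ETdyn p π} Topt) :
    (∀ n : ℕ, n ≤ ⌊F / (Δ * r istar)⌋₊ → 0 < F - (n : ℝ) * Δ * r istar →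
      Topt ≤ ⨅ i : {j : Fin N // j ≠ istar},
        (F / (r i * p i) + Δ * ((1 - p i) / p i
          - (n : ℝ) * ((r istar * p istar - r i * p i) / (r i * p i * p istar))))) ∧
    (∀ n n' : ℕ, n ≤ ⌊F / (Δ * r istar)⌋₊ → 0 < F - (n : ℝ) * Δ * r istar →
      n' ≤ ⌊F / (Δ * r istar)⌋₊ → 0 < F - (n' : ℝ) * Δ * r istar → n ≤ n' →
      (⨅ i : {j : Fin N // j ≠ istar},
        (F / (r i * p i) + Δ * ((1 - p i) / p i
          - (n' : ℝ) * ((r istar * p istar - r i * p i) / (r i * p i * p istar)))))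
      ≤ ⨅ i : {j : Fin N // j ≠ istar},
        (F / (r i * p i) + Δ * ((1 - p i) / p i
          - (n : ℝ) * ((r istar * p istar - r i * p i) / (r i * p i * p istar))))) := by
  have hnt : Nontrivial (Fin N) := Fin.nontrivial_iff_two_le.mpr hN
  have hne : Nonempty {j : Fin N // j ≠ istar} := by
    obtain ⟨j, hj⟩ := exists_ne istar
    exact ⟨⟨j, hj⟩⟩
  constructor
  · intro n hn hFn
    apply le_ciInf
    rintro ⟨i, hi⟩
    have ha : 0 < r i := hr i
    have hq0 : 0 < p i := (hp i).1
    have hq1 : p i ≤ 1 := (hp i).2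
    have hP0 : 0 < p istar := (hp istar).1
    have hR : 0 < r istar := hr istar
    set Fn : ℝ := F - (n : ℝ) * Δ * r istar with hFndef
    set K : ℕ := ⌈Fn / (Δ * r i)⌉₊ with hKdef
    have hy : 0 < Fn / (Δ * r i) := div_pos hFn (mul_pos hΔ ha)
    have hK1 : 1 ≤ K := Nat.one_le_ceil_iff.mpr hy
    have hup : Fn ≤ (K : ℝ) * (Δ * r i) := by
      have := Nat.le_ceil (Fn / (Δ * r i))
      calc Fn = Fn / (Δ * r i) * (Δ * r i) := by field_simp
        _ ≤ (K : ℝ) * (Δ * r i) := by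
            apply mul_le_mul_of_nonneg_right this (mul_pos hΔ ha).le
    have hlow : ((K : ℝ) - 1) * (Δ * r i) < Fn := by
      have h1 : (K : ℝ) < Fn / (Δ * r i) + 1 := Nat.ceil_lt_add_one hy.le
      have h2 : (K : ℝ) - 1 < Fn / (Δ * r i) := by linarith
      calc ((K : ℝ) - 1) * (Δ * r i) < Fn / (Δ * r i) * (Δ * r i) :=
            mul_lt_mul_of_pos_right h2 (mul_pos hΔ ha)
        _ = Fn := by field_simp
    -- the policy
    set π : Policy N r Δ F :=
      { L := n + K
        hL := by omega
        chan := fun m => if m < n then istar else i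
        pos := by
          intro m hm
          rw [sum_if_aux r istar i n m]
          by_cases h : m ≤ n
          · rw [Nat.min_eq_left h, Nat.sub_eq_zero_of_le h]
            have : (m : ℝ) ≤ (n : ℝ) := Nat.cast_le.mpr h
            have h3 : (m : ℝ) * r istar ≤ (n : ℝ) * r istar :=
              mul_le_mul_of_nonneg_right this hR.le
            simp only [Nat.cast_zero]
            nlinarith
          · push_neg at h
            rw [Nat.min_eq_right h.le]
            have hj : m - n ≤ K - 1 := by omega
            have hjr : ((m - n : ℕ) : ℝ) ≤ (K : ℝ) - 1 := by
              have : ((m - n : ℕ) : ℝ) ≤ ((K - 1 : ℕ) : ℝ) := Nat.cast_le.mpr hj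
              rwa [Nat.cast_sub hK1, Nat.cast_one] at this
            have h4 : ((m - n : ℕ) : ℝ) * (Δ * r i) ≤ ((K : ℝ) - 1) * (Δ * r i) :=
              mul_le_mul_of_nonneg_right hjr (mul_pos hΔ ha).le
            nlinarith
        last := by
          have h1 : min (n + K - 1) n = n := by omega
          have h2 : n + K - 1 - n = K - 1 := by omega
          have h3 : ¬ (n + K - 1 < n) := by omega
          have h4 : (fun m => if m < n then istar else i) (n + K - 1) = i := if_neg h3
          rw [sum_if_aux r istar i n (n + K - 1), h1, h2, if_neg h3,
            Nat.cast_sub hK1, Nat.cast_one]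
          nlinarith }
    have hT : Topt ≤ ETdyn p π := hopt.2 ⟨π, rfl⟩
    refine hT.trans ?_
    have hL1 : π.L - 1 = n + K - 1 := rfl
    have hE : ETdyn p π
        = Δ * (((n : ℝ) * (1 / p istar) + ((K : ℝ) - 1) * (1 / p i)) + (1 - p i) / p i)
          + (F - Δ * ((n : ℝ) * r istar + ((K : ℝ) - 1) * r i)) / r i := by
      have h1 : min (n + K - 1) n = n := by omega
      have h2 : n + K - 1 - n = K - 1 := by omega
      have h3 : ¬ (n + K - 1 < n) := by omega
      show Δ * ((∑ m ∈ Finset.range (n + K - 1), 1 / p (if m < n then istar else i))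
            + (1 - p (if n + K - 1 < n then istar else i)) / p (if n + K - 1 < n then istar else i))
          + (F - Δ * ∑ m ∈ Finset.range (n + K - 1), r (if m < n then istar else i))
              / r (if n + K - 1 < n then istar else i) = _
      have hs1 := sum_if_aux (fun j => 1 / p j) istar i n (n + K - 1)
      have hs2 := sum_if_aux r istar i n (n + K - 1)
      simp only [h1, h2, Nat.cast_sub hK1, Nat.cast_one] at hs1 hs2
      rw [if_neg h3]
      simp only [hs1, hs2]
    rw [hE]
    rw [← sub_nonneg]
    have hq : p i ≠ 0 := ne_of_gt hq0
    have hP : p istar ≠ 0 := ne_of_gt hP0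
    have har : r i ≠ 0 := ne_of_gt ha
    have hid : (F / (r i * p i) + Δ * ((1 - p i) / p i
          - (n : ℝ) * ((r istar * p istar - r i * p i) / (r i * p i * p istar))))
        - (Δ * (((n : ℝ) * (1 / p istar) + ((K : ℝ) - 1) * (1 / p i)) + (1 - p i) / p i)
          + (F - Δ * ((n : ℝ) * r istar + ((K : ℝ) - 1) * r i)) / r i)
        = (Fn - ((K : ℝ) - 1) * (Δ * r i)) * (1 - p i) / (r i * p i) := by
      rw [hFndef]
      field_simp
      ring
    rw [hid]
    apply div_nonneg _ (mul_pos ha hq0).le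
    apply mul_nonneg (by linarith) (by linarith)
  · intro n n' _ _ _ _ hnn
    have hbdd : ∀ m : ℕ, BddBelow (Set.range fun i : {j : Fin N // j ≠ istar} =>
        (F / (r i * p i) + Δ * ((1 - p i) / p i
          - (m : ℝ) * ((r istar * p istar - r i * p i) / (r i * p i * p istar))))) :=
      fun m => (Set.finite_range _).bddBelow
    apply ciInf_mono (hbdd n')
    rintro ⟨i, hi⟩
    have hc : 0 ≤ (r istar * p istar - r i * p i) / (r i * p i * p istar) :=
      div_nonneg (sub_nonneg.mpr (hstar i)) (mul_pos (mul_pos (hr i) (hp i).1) (hp istar).1).le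
    have hn : (n : ℝ) ≤ (n' : ℝ) := Nat.cast_le.mpr hnn
    have : (n : ℝ) * ((r istar * p istar - r i * p i) / (r i * p i * p istar))
        ≤ (n' : ℝ) * ((r istar * p istar - r i * p i) / (r i * p i * p istar)) :=
      mul_le_mul_of_nonneg_right hn hc
    nlinarith [hΔ.le]
end

section
/- Let Δ > 0, r > 0, F > 0, and let the channel be positively correlated: q_1, q_0 ∈ (0,1) with 1 − q_1 − q_0 > 0, starting in the stationary regime c = π = q_1/(q_1 + q_0). Then with k = ⌊F/(Δr)⌋ and α = F/(Δr) − k, the expected transfer time E[T] = Δ( (k + 1{α>0} − 1)·q_0/q_1 + (1−π)/q_1 ) + F/r satisfies E[T] > F/(r·π) strictly, for every F > 0 (in particular even when F is an integer multiple of Δr). -/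
/-- For a positively correlated two-state Markovian channel (`q₁, q₀ ∈ (0,1)` with
`1 - q₁ - q₀ > 0`) starting in its stationary regime `c = π = q₁/(q₁+q₀)`, the
expected static transfer time
`E[T] = Δ((k + 1{α>0} - 1)q₀/q₁ + (1-π)/q₁) + F/r` strictly exceeds `F/(rπ)` for
every file size `F > 0` (in particular even when `F` is an integer multiple of `Δr`),
where `k = ⌊F/(Δr)⌋` and `α = F/(Δr) - k`. -/
theorem positively_correlated_markovian_strict_lower_bound
    (Δ r F q₁ q₀ : ℝ) (hΔ : 0 < Δ) (hr : 0 < r) (hF : 0 < F)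
    (hq₁ : q₁ ∈ Set.Ioo (0 : ℝ) 1) (hq₀ : q₀ ∈ Set.Ioo (0 : ℝ) 1)
    (hcorr : 0 < 1 - q₁ - q₀)
    (k : ℕ) (α : ℝ) (hk : k = ⌊F / (Δ * r)⌋₊) (hα : α = F / (Δ * r) - k) :
    F / (r * (q₁ / (q₁ + q₀)))
      < Δ * (((k : ℝ) + (if 0 < α then 1 else 0) - 1) * q₀ / q₁
          + (1 - q₁ / (q₁ + q₀)) / q₁) + F / r := by
  obtain ⟨h1a, h1b⟩ := hq₁
  obtain ⟨h0a, h0b⟩ := hq₀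
  have hs : 0 < q₁ + q₀ := by linarith
  have hΔr : 0 < Δ * r := mul_pos hΔ hr
  have hxpos : 0 < F / (Δ * r) := div_pos hF hΔr
  have hα0 : 0 ≤ α := by
    rw [hα, hk]
    have := Nat.floor_le (le_of_lt hxpos)
    linarith
  have hα1 : α < 1 := by
    rw [hα, hk]
    have := Nat.lt_floor_add_one (F / (Δ * r))
    linarith
  have h1 : (k : ℝ) + α = F / (Δ * r) := by rw [hα]; ring
  have hFeq : F = ((k : ℝ) + α) * (Δ * r) := by rw [h1]; field_simp
  rw [hFeq, ← sub_pos]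
  by_cases hc : 0 < α
  · simp only [if_pos hc]
    have key : Δ * (((k : ℝ) + 1 - 1) * q₀ / q₁ + (1 - q₁ / (q₁ + q₀)) / q₁)
          + ((k : ℝ) + α) * (Δ * r) / r
          - ((k : ℝ) + α) * (Δ * r) / (r * (q₁ / (q₁ + q₀)))
        = Δ * (q₀ * (1 - α * (q₁ + q₀))) / (q₁ * (q₁ + q₀)) := by
      field_simp
      ring
    rw [key]
    have h2 : α * (q₁ + q₀) < 1 := by nlinarith
    have : 0 < q₀ * (1 - α * (q₁ + q₀)) := by nlinarith
    positivity
  · have hαz : α = 0 := le_antisymm (not_lt.1 hc) hα0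
    simp only [hαz, if_neg (lt_irrefl (0:ℝ)), add_zero]
    have key : Δ * (((k : ℝ) - 1) * q₀ / q₁ + (1 - q₁ / (q₁ + q₀)) / q₁)
          + (k : ℝ) * (Δ * r) / r
          - (k : ℝ) * (Δ * r) / (r * (q₁ / (q₁ + q₀)))
        = Δ * (q₀ * (1 - (q₁ + q₀))) / (q₁ * (q₁ + q₀)) := by
      field_simp
      ring
    rw [key]
    have : 0 < q₀ * (1 - (q₁ + q₀)) := by nlinarith
    positivity
end

section
/- Let Δ > 0, F > 0, and consider two Markovian channels i and j with the same rate r > 0 and the same initial availability probability c ∈ [0,1), whose transition probabilities satisfy q_{i,1} = β·q_{j,1} and q_{i,0} = β·q_{j,0} for some β ∈ (0,1), with q_{j,1} ∈ (0,1] and q_{j,0} ∈ [0,1] (so the two channels have equal stationary availability and equal throughput but channel i has larger correlation). Then the difference of expected transfer times equals E[T(i,F)] − E[T(j,F)] = Δ(1−c)( 1/q_{i,1} − 1/q_{j,1} ) > 0; i.e., larger correlation strictly increases the expected file transfer time. -/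
/-- Effect of correlation on the expected file transfer time: two Markovian channels
`i` and `j` with the same rate `r`, the same initial availability `c`, and transition
probabilities related by `q_{i,1} = β q_{j,1}`, `q_{i,0} = β q_{j,0}` with `β ∈ (0,1)`
(hence the same stationary availability and throughput, but channel `i` more
correlated) satisfy
`E[T(i,F)] - E[T(j,F)] = Δ(1-c)(1/q_{i,1} - 1/q_{j,1}) > 0`, where
`E[T] = Δ((k + 1{α>0} - 1)q₀/q₁ + (1-c)/q₁) + F/r` with `k = ⌊F/(Δr)⌋`,
`α = F/(Δr) - k`. -/
theorem larger_correlation_increases_transfer_time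
    (Δ r F c β qj₁ qj₀ qi₁ qi₀ : ℝ) (hΔ : 0 < Δ) (hr : 0 < r) (hF : 0 < F)
    (hc : c ∈ Set.Ico (0 : ℝ) 1) (hβ : β ∈ Set.Ioo (0 : ℝ) 1)
    (hqj₁ : qj₁ ∈ Set.Ioc (0 : ℝ) 1) (hqj₀ : qj₀ ∈ Set.Icc (0 : ℝ) 1)
    (hqi₁ : qi₁ = β * qj₁) (hqi₀ : qi₀ = β * qj₀)
    (k : ℕ) (α : ℝ) (hk : k = ⌊F / (Δ * r)⌋₊) (hα : α = F / (Δ * r) - k) :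
    (Δ * (((k : ℝ) + (if 0 < α then 1 else 0) - 1) * qi₀ / qi₁ + (1 - c) / qi₁) + F / r)
      - (Δ * (((k : ℝ) + (if 0 < α then 1 else 0) - 1) * qj₀ / qj₁ + (1 - c) / qj₁) + F / r)
      = Δ * (1 - c) * (1 / qi₁ - 1 / qj₁) ∧
    0 < Δ * (1 - c) * (1 / qi₁ - 1 / qj₁) := by
  obtain ⟨hβ0, hβ1⟩ := hβ
  obtain ⟨hqj1, _⟩ := hqj₁
  have hqi1 : 0 < qi₁ := by rw [hqi₁]; positivity
  constructor
  · subst hqi₁ hqi₀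
    have hne : qj₁ ≠ 0 := ne_of_gt hqj1
    have hbne : β ≠ 0 := ne_of_gt hβ0
    field_simp
    ring
  · have h1 : (1:ℝ)/qj₁ < 1/qi₁ := by
      apply one_div_lt_one_div_of_lt hqi1
      rw [hqi₁]
      nlinarith
    have hc1 : 0 < 1 - c := by linarith [hc.2]
    have h2 : 0 < 1/qi₁ - 1/qj₁ := by linarith
    positivity
end
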